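/- For every dimension d ≥ 5, the sum over all sites i ∈ ℤ^d of the squared hitting probabilities of the origin is finite: ∑_{i ∈ ℤ^d} (P^i(∃ n ≥ 0, S_n = 0))² < ∞. -/

import Mathlib

open MeasureTheory ProbabilityTheory

noncomputable section

/-- The set of the `2 d` signed unit vectors in `ℤ^d`. -/
def unitVecs (d : ℕ) : Set (Fin d → ℤ) :=
  {v | ∃ j : Fin d, v = Pi.single j 1 ∨ v = -Pi.single j 1}

/-- The position at time `n` of the walk started at `x` with increments `ξ 0, ξ 1, …`:
`S_n = x + ξ_1 + ⋯ + ξ_n`. -/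
def walk {d : ℕ} {Ω : Type*} (ξ : ℕ → Ω → (Fin d → ℤ)) (x : Fin d → ℤ)
    (n : ℕ) (ω : Ω) : Fin d → ℤ :=
  x + ∑ k ∈ Finset.range n, ξ k ω

/-- `ξ 0, ξ 1, …` are i.i.d. increments of a simple symmetric random walk on `ℤ^d` under `P`:
they are measurable, independent, and each is uniformly distributed on the `2 d` signed
unit vectors. -/
def IsSRW {d : ℕ} {Ω : Type*} [MeasurableSpace Ω] (P : Measure Ω)
    (ξ : ℕ → Ω → (Fin d → ℤ)) : Prop :=
  (∀ k, Measurable (ξ k)) ∧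
  iIndepFun ξ P ∧
  ∀ (k : ℕ) (v : Fin d → ℤ),
    P {ω | ξ k ω = v} = (unitVecs d).indicator (fun _ => (1 : ENNReal) / (2 * d)) v

namespace SRW

set_option linter.unusedSectionVars false

open Real Set

instance (d : ℕ) : MeasurableAdd₂ (Fin d → ℤ) := ⟨measurable_of_countable _⟩

variable {d : ℕ} {Ω : Type} [MeasurableSpace Ω] {P : Measure Ω} [IsProbabilityMeasure P]
  {ξ : ℕ → Ω → (Fin d → ℤ)}

lemma meas_sum (hm : ∀ k, Measurable (ξ k)) (s : Finset ℕ) :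
    Measurable (fun ω => ∑ k ∈ s, ξ k ω) :=
  Finset.measurable_sum s (fun k _ => hm k)

lemma conv {X Y : Ω → (Fin d → ℤ)} (hX : Measurable X) (hY : Measurable Y)
    (h : IndepFun X Y P) (w : Fin d → ℤ) :
    P {ω | X ω + Y ω = w} = ∑' u, P {ω | X ω = u} * P {ω | Y ω = w - u} := by
  have hset : {ω | X ω + Y ω = w} = ⋃ u, (X ⁻¹' {u} ∩ Y ⁻¹' {w - u}) := by
    ext ω
    simp only [Set.mem_setOf_eq, Set.mem_iUnion, Set.mem_inter_iff, Set.mem_preimage,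
      Set.mem_singleton_iff]
    constructor
    · intro h; exact ⟨X ω, rfl, eq_sub_of_add_eq' h⟩
    · rintro ⟨u, rfl, h2⟩; rw [h2]; exact add_sub_cancel _ _
  rw [hset, measure_iUnion ?_ ?_]
  · exact tsum_congr fun u => by
      rw [h.measure_inter_preimage_eq_mul _ _ (measurableSet_singleton _)
        (measurableSet_singleton _)]; rfl
  · intro u u' huu'
    simp only [Function.onFun, Set.disjoint_left]
    rintro ω ⟨h1, _⟩ ⟨h3, _⟩
    exact huu' ((Set.mem_singleton_iff.1 h1).symm.trans (Set.mem_singleton_iff.1 h3))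
  · exact fun u => (hX (measurableSet_singleton u)).inter (hY (measurableSet_singleton _))

lemma block (hξ : IsSRW P ξ) (m : ℕ) : ∀ (n : ℕ) (w : Fin d → ℤ),
    P {ω | ∑ k ∈ Finset.Ico n (n + m), ξ k ω = w}
      = P {ω | ∑ k ∈ Finset.range m, ξ k ω = w} := by
  induction m with
  | zero => intro n w; simp
  | succ m ih =>
    intro n w
    have h1 : {ω | ∑ k ∈ Finset.Ico n (n + (m+1)), ξ k ω = w}
        = {ω | (fun ω => ∑ k ∈ Finset.Ico n (n + m), ξ k ω) ω + ξ (n + m) ω = w} := by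
      ext ω
      rw [Set.mem_setOf_eq, Set.mem_setOf_eq, ← Nat.add_assoc,
        Finset.sum_Ico_succ_top (Nat.le_add_right n m)]
    have h2 : {ω | ∑ k ∈ Finset.range (m+1), ξ k ω = w}
        = {ω | (fun ω => ∑ k ∈ Finset.range m, ξ k ω) ω + ξ m ω = w} := by
      ext ω; rw [Set.mem_setOf_eq, Set.mem_setOf_eq, Finset.sum_range_succ]
    have i1 : IndepFun (fun ω => ∑ k ∈ Finset.Ico n (n + m), ξ k ω) (ξ (n + m)) P := by
      have := hξ.2.1.indepFun_finsetSum_of_notMem hξ.1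
        (s := Finset.Ico n (n + m)) (i := n + m) (by simp)
      convert this using 1
      funext ω; simp [Finset.sum_apply]
    have i2 : IndepFun (fun ω => ∑ k ∈ Finset.range m, ξ k ω) (ξ m) P := by
      have := hξ.2.1.indepFun_sum_range_succ hξ.1 m
      convert this using 1
      funext ω; simp [Finset.sum_apply]
    rw [h1, h2, conv (meas_sum hξ.1 _) (hξ.1 _) i1 w, conv (meas_sum hξ.1 _) (hξ.1 _) i2 w]
    exact tsum_congr fun u => by rw [ih n u, hξ.2.2, hξ.2.2]

lemma q_neg (d : ℕ) (w : Fin d → ℤ) :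
    (unitVecs d).indicator (fun _ => (1 : ENNReal) / (2 * d)) (-w)
      = (unitVecs d).indicator (fun _ => (1 : ENNReal) / (2 * d)) w := by
  have : ∀ v : Fin d → ℤ, v ∈ unitVecs d → -v ∈ unitVecs d := by
    rintro v ⟨j, hj | hj⟩
    · exact ⟨j, Or.inr (by rw [hj])⟩
    · exact ⟨j, Or.inl (by rw [hj, neg_neg])⟩
  by_cases hw : w ∈ unitVecs d
  · rw [Set.indicator_of_mem hw, Set.indicator_of_mem (this w hw)]
  · rw [Set.indicator_of_notMem hw, Set.indicator_of_notMem
      (fun hc => hw (by simpa using this _ hc))]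

lemma psymm (hξ : IsSRW P ξ) (m : ℕ) : ∀ (v : Fin d → ℤ),
    P {ω | ∑ k ∈ Finset.range m, ξ k ω = -v} = P {ω | ∑ k ∈ Finset.range m, ξ k ω = v} := by
  induction m with
  | zero => intro v; simp [neg_eq_zero, eq_comm (a := (0 : Fin d → ℤ))]
  | succ m ih =>
    intro v
    have i2 : IndepFun (fun ω => ∑ k ∈ Finset.range m, ξ k ω) (ξ m) P := by
      have := hξ.2.1.indepFun_sum_range_succ hξ.1 m
      convert this using 1
      funext ω; simp [Finset.sum_apply]
    have h2 : ∀ u : Fin d → ℤ, {ω | ∑ k ∈ Finset.range (m+1), ξ k ω = u}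
        = {ω | (fun ω => ∑ k ∈ Finset.range m, ξ k ω) ω + ξ m ω = u} := by
      intro u; ext ω; rw [Set.mem_setOf_eq, Set.mem_setOf_eq, Finset.sum_range_succ]
    rw [h2, h2, conv (meas_sum hξ.1 _) (hξ.1 _) i2, conv (meas_sum hξ.1 _) (hξ.1 _) i2]
    rw [← (Equiv.neg (Fin d → ℤ)).tsum_eq]
    exact tsum_congr fun u => by
      simp only [Equiv.neg_apply]
      rw [ih u, hξ.2.2, hξ.2.2]
      congr 1
      have : -v - -u = -(v - u) := by ring
      rw [this, q_neg]

lemma split (hξ : IsSRW P ξ) (n m : ℕ) (w : Fin d → ℤ) :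
    P {ω | ∑ k ∈ Finset.range (n + m), ξ k ω = w}
      = ∑' u, P {ω | ∑ k ∈ Finset.range n, ξ k ω = u}
          * P {ω | ∑ k ∈ Finset.range m, ξ k ω = w - u} := by
  have hsplit : ∀ ω : Ω, ∑ k ∈ Finset.range (n + m), ξ k ω
      = (∑ k ∈ Finset.range n, ξ k ω) + ∑ k ∈ Finset.Ico n (n + m), ξ k ω := by
    intro ω
    rw [Finset.range_eq_Ico, Finset.range_eq_Ico]
    exact (Finset.sum_Ico_consecutive (fun k => ξ k ω) (Nat.zero_le n) (Nat.le_add_right n m)).symm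
  have hindep : IndepFun (fun ω => ∑ k ∈ Finset.range n, ξ k ω)
      (fun ω => ∑ k ∈ Finset.Ico n (n + m), ξ k ω) P := by
    have hdisj : Disjoint (Finset.range n) (Finset.Ico n (n + m)) := by
      simp [Finset.disjoint_left, Finset.mem_range, Finset.mem_Ico]
      omega
    have base := hξ.2.1.indepFun_finset (Finset.range n) (Finset.Ico n (n + m)) hdisj hξ.1
    have := base.comp
      (φ := fun v : ↥(Finset.range n) → (Fin d → ℤ) => ∑ i, v i)
      (ψ := fun v : ↥(Finset.Ico n (n + m)) → (Fin d → ℤ) => ∑ i, v i)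
      (Finset.measurable_sum _ fun i _ => measurable_pi_apply i)
      (Finset.measurable_sum _ fun i _ => measurable_pi_apply i)
    convert this using 1
    · funext ω
      show _ = ∑ i : (Finset.range n : Finset ℕ), ξ i ω
      rw [← Finset.sum_coe_sort (Finset.range n) (fun i => ξ i ω)]
    · funext ω
      show _ = ∑ i : (Finset.Ico n (n+m) : Finset ℕ), ξ i ω
      rw [← Finset.sum_coe_sort (Finset.Ico n (n+m)) (fun i => ξ i ω)]
  have h1 : {ω | ∑ k ∈ Finset.range (n + m), ξ k ω = w}
      = {ω | (fun ω => ∑ k ∈ Finset.range n, ξ k ω) ω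
          + (fun ω => ∑ k ∈ Finset.Ico n (n + m), ξ k ω) ω = w} := by
    ext ω; rw [Set.mem_setOf_eq, Set.mem_setOf_eq, hsplit ω]
  rw [h1, conv (meas_sum hξ.1 _) (meas_sum hξ.1 _) hindep w]
  exact tsum_congr fun u => by rw [block hξ m n]

lemma key6 (hξ : IsSRW P ξ) (n m : ℕ) :
    ∑' u, P {ω | ∑ k ∈ Finset.range n, ξ k ω = u}
        * P {ω | ∑ k ∈ Finset.range m, ξ k ω = u}
      = P {ω | ∑ k ∈ Finset.range (n + m), ξ k ω = 0} := by
  rw [split hξ n m 0]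
  exact tsum_congr fun u => by rw [zero_sub, psymm hξ m u]


def eC (x : ℝ) : ℂ := Complex.exp ((2 * Real.pi * x : ℝ) * Complex.I)

def ch (d : ℕ) (θ : Fin d → ℝ) (v : Fin d → ℤ) : ℂ := ∏ j, eC (θ j * v j)

def ph (d : ℕ) (θ : Fin d → ℝ) : ℝ := (d : ℝ)⁻¹ * ∑ j, Real.cos (2 * Real.pi * θ j)

lemma norm_eC (x : ℝ) : ‖eC x‖ = 1 := by
  simpa [eC] using Complex.norm_exp_ofReal_mul_I (2 * Real.pi * x)

lemma eC_add (x y : ℝ) : eC (x + y) = eC x * eC y := by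
  rw [eC, eC, eC, ← Complex.exp_add]
  congr 1
  push_cast
  ring

lemma eC_zero : eC 0 = 1 := by simp [eC]

lemma ch_add {d : ℕ} (θ : Fin d → ℝ) (a b : Fin d → ℤ) :
    ch d θ (a + b) = ch d θ a * ch d θ b := by
  rw [ch, ch, ch, ← Finset.prod_mul_distrib]
  refine Finset.prod_congr rfl fun j _ => ?_
  rw [← eC_add]
  congr 1
  simp only [Pi.add_apply]
  push_cast
  ring

lemma norm_ch {d : ℕ} (θ : Fin d → ℝ) (v : Fin d → ℤ) : ‖ch d θ v‖ = 1 := by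
  rw [ch, norm_prod]
  simp only [norm_eC]
  simp

lemma ch_zero {d : ℕ} (θ : Fin d → ℝ) : ch d θ 0 = 1 := by
  simp [ch, eC_zero]

lemma abs_ph_le_one {d : ℕ} (hd : d ≠ 0) (θ : Fin d → ℝ) : |ph d θ| ≤ 1 := by
  rw [ph, abs_mul, abs_inv, Nat.abs_cast]
  have h1 : |∑ j, Real.cos (2 * Real.pi * θ j)| ≤ (d : ℝ) := by
    calc |∑ j, Real.cos (2 * Real.pi * θ j)| ≤ ∑ j, |Real.cos (2 * Real.pi * θ j)| :=
        Finset.abs_sum_le_sum_abs _ _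
    _ ≤ ∑ _j : Fin d, (1 : ℝ) := Finset.sum_le_sum fun j _ => Real.abs_cos_le_one _
    _ = d := by simp
  have hd' : (0 : ℝ) < d := by positivity
  rw [inv_mul_le_iff₀ hd', mul_one]
  exact h1


lemma eC_add_neg (x : ℝ) : eC x + eC (-x) = ((2 * Real.cos (2 * Real.pi * x) : ℝ) : ℂ) := by
  have h : (2 * Real.pi * (-x) : ℝ) = -(2 * Real.pi * x) := by ring
  rw [eC, eC, h, Complex.ofReal_neg, Complex.exp_mul_I, Complex.exp_mul_I,
    Complex.cos_neg, Complex.sin_neg]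
  push_cast
  ring

lemma ch_single {d : ℕ} (θ : Fin d → ℝ) (j : Fin d) : ch d θ (Pi.single j 1) = eC (θ j) := by
  rw [ch]
  rw [Finset.prod_eq_single j]
  · simp
  · intro i _ hij
    rw [Pi.single_eq_of_ne hij]
    simpa using eC_zero
  · simp

lemma ch_single_neg {d : ℕ} (θ : Fin d → ℝ) (j : Fin d) :
    ch d θ (-Pi.single j 1) = eC (-θ j) := by
  rw [ch]
  rw [Finset.prod_eq_single j]
  · simp
  · intro i _ hij
    simp only [Pi.neg_apply]
    rw [Pi.single_eq_of_ne hij]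
    simpa using eC_zero
  · simp

lemma single_inj {d : ℕ} : Function.Injective (fun j : Fin d => Pi.single j (1 : ℤ)) := by
  intro j j' h
  by_contra hne
  have := congrFun h j
  simp only [Pi.single_eq_same, Pi.single_eq_of_ne hne] at this
  exact one_ne_zero this

lemma single_ne_neg {d : ℕ} (j j' : Fin d) : Pi.single j (1 : ℤ) ≠ -(Pi.single j' 1 : Fin d → ℤ) := by
  intro h
  have := congrFun h j
  simp only [Pi.single_eq_same, Pi.neg_apply] at this
  rcases eq_or_ne j j' with rfl | hne
  · simp at this
  · rw [Pi.single_eq_of_ne hne] at this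
    simp at this

lemma integrable_bdd_one' {α : Type*} [MeasurableSpace α] {μ : Measure α} [IsFiniteMeasure μ]
    {f : α → ℂ} (hm : AEStronglyMeasurable f μ) (hb : ∀ x, ‖f x‖ ≤ 1) : Integrable f μ :=
  (integrable_const 1).mono' hm (Filter.Eventually.of_forall hb)

lemma onestep (hξ : IsSRW P ξ) (hd : d ≠ 0) (θ : Fin d → ℝ) (k : ℕ) :
    ∫ ω, ch d θ (ξ k ω) ∂P = (ph d θ : ℂ) := by
  have hmeas : Measurable (ch d θ) := measurable_of_countable _
  have hmap : IsProbabilityMeasure (P.map (ξ k)) := Measure.isProbabilityMeasure_map (hξ.1 k).aemeasurable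
  have hint : Integrable (ch d θ) (P.map (ξ k)) :=
    integrable_bdd_one' hmeas.aestronglyMeasurable (fun v => le_of_eq (norm_ch θ v))
  rw [← integral_map (hξ.1 k).aemeasurable hmeas.aestronglyMeasurable,
    integral_countable' hint]
  have hsingle : ∀ v : Fin d → ℤ, (P.map (ξ k)) {v}
      = (unitVecs d).indicator (fun _ => (1 : ENNReal) / (2 * d)) v := by
    intro v
    rw [Measure.map_apply (hξ.1 k) (measurableSet_singleton v)]
    rw [← hξ.2.2 k v]
    rfl
  classical
  set F : Finset (Fin d → ℤ) :=
    (Finset.image (fun j => Pi.single j 1) Finset.univ)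
      ∪ (Finset.image (fun j => -Pi.single j 1) Finset.univ) with hF
  have hFU : ∀ v : Fin d → ℤ, v ∈ F ↔ v ∈ unitVecs d := by
    intro v
    simp [hF, unitVecs, Finset.mem_union, Finset.mem_image, exists_or, eq_comm]
  have hvanish : ∀ v ∉ F, ((P.map (ξ k)) {v}).toReal • ch d θ v = 0 := by
    intro v hv
    rw [hsingle v, Set.indicator_of_notMem (fun hc => hv ((hFU v).2 hc))]
    simp
  simp only [measureReal_def]
  rw [tsum_eq_sum hvanish]
  have hdisj : Disjoint (Finset.image (fun j : Fin d => Pi.single j (1:ℤ)) Finset.univ)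
      (Finset.image (fun j : Fin d => -Pi.single j (1:ℤ)) Finset.univ) := by
    rw [Finset.disjoint_left]
    rintro v hv1 hv2
    simp only [Finset.mem_image, Finset.mem_univ, true_and] at hv1 hv2
    obtain ⟨j, rfl⟩ := hv1
    obtain ⟨j', hj'⟩ := hv2
    exact single_ne_neg j j' hj'.symm
  have hq : ∀ v ∈ unitVecs d, ((P.map (ξ k)) {v}).toReal = 1 / (2 * d) := by
    intro v hv
    rw [hsingle v, Set.indicator_of_mem hv]
    rw [ENNReal.toReal_div]
    norm_num
  rw [hF, Finset.sum_union hdisj, Finset.sum_image (fun a _ b _ h => single_inj h),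
    Finset.sum_image (fun a _ b _ h => single_inj (neg_injective h))]
  have e1 : ∀ j : Fin d, ((P.map (ξ k)) {Pi.single j (1:ℤ)}).toReal • ch d θ (Pi.single j 1)
      = (1 / (2 * d) : ℝ) • eC (θ j) := by
    intro j
    rw [hq _ ⟨j, Or.inl rfl⟩, ch_single]
  have e2 : ∀ j : Fin d, ((P.map (ξ k)) {-Pi.single j (1:ℤ)}).toReal • ch d θ (-Pi.single j 1)
      = (1 / (2 * d) : ℝ) • eC (-θ j) := by
    intro j
    rw [hq _ ⟨j, Or.inr rfl⟩, ch_single_neg]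
  rw [Finset.sum_congr rfl (fun j _ => e1 j), Finset.sum_congr rfl (fun j _ => e2 j)]
  rw [← Finset.sum_add_distrib]
  simp only [← smul_add, eC_add_neg]
  rw [← Finset.smul_sum]
  rw [ph]
  push_cast
  rw [Finset.mul_sum]
  rw [Finset.smul_sum]
  refine Finset.sum_congr rfl fun j _ => ?_
  rw [Complex.real_smul]
  push_cast
  have hd' : (d : ℂ) ≠ 0 := Nat.cast_ne_zero.2 hd
  field_simp


lemma indep_integral_mul_complex {X Y : Ω → ℂ} (h : IndepFun X Y P)
    (hX : Integrable X P) (hY : Integrable Y P) :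
    ∫ ω, X ω * Y ω ∂P = (∫ ω, X ω ∂P) * ∫ ω, Y ω ∂P := by
  have hXY : Integrable (fun ω => X ω * Y ω) P := h.integrable_mul hX hY
  have hre : Measurable fun z : ℂ => z.re := Complex.measurable_re
  have him : Measurable fun z : ℂ => z.im := Complex.measurable_im
  have irr : IndepFun (fun ω => (X ω).re) (fun ω => (Y ω).re) P := h.comp hre hre
  have iri : IndepFun (fun ω => (X ω).re) (fun ω => (Y ω).im) P := h.comp hre him
  have iir : IndepFun (fun ω => (X ω).im) (fun ω => (Y ω).re) P := h.comp him hre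
  have iii : IndepFun (fun ω => (X ω).im) (fun ω => (Y ω).im) P := h.comp him him
  have hXre : Integrable (fun ω => (X ω).re) P := hX.re
  have hXim : Integrable (fun ω => (X ω).im) P := hX.im
  have hYre : Integrable (fun ω => (Y ω).re) P := hY.re
  have hYim : Integrable (fun ω => (Y ω).im) P := hY.im
  have h1 := irr.integral_fun_mul_eq_mul_integral hXre.1 hYre.1
  have h2 := iii.integral_fun_mul_eq_mul_integral hXim.1 hYim.1
  have h3 := iri.integral_fun_mul_eq_mul_integral hXre.1 hYim.1
  have h4 := iir.integral_fun_mul_eq_mul_integral hXim.1 hYre.1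
  have A : ∫ ω, RCLike.re (X ω * Y ω) ∂P
      = (∫ ω, (X ω).re ∂P) * (∫ ω, (Y ω).re ∂P)
        - (∫ ω, (X ω).im ∂P) * (∫ ω, (Y ω).im ∂P) := by
    have e : (fun ω => RCLike.re (X ω * Y ω))
        = fun ω => (X ω).re * (Y ω).re - (X ω).im * (Y ω).im :=
      funext fun ω => Complex.mul_re _ _
    have m1 : Integrable (fun ω => (X ω).re * (Y ω).re) P := irr.integrable_mul hXre hYre
    have m2 : Integrable (fun ω => (X ω).im * (Y ω).im) P := iii.integrable_mul hXim hYim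
    rw [e, integral_sub m1 m2, h1, h2]
  have B : ∫ ω, RCLike.im (X ω * Y ω) ∂P
      = (∫ ω, (X ω).re ∂P) * (∫ ω, (Y ω).im ∂P)
        + (∫ ω, (X ω).im ∂P) * (∫ ω, (Y ω).re ∂P) := by
    have e : (fun ω => RCLike.im (X ω * Y ω))
        = fun ω => (X ω).re * (Y ω).im + (X ω).im * (Y ω).re :=
      funext fun ω => Complex.mul_im _ _
    have m3 : Integrable (fun ω => (X ω).re * (Y ω).im) P := iri.integrable_mul hXre hYim
    have m4 : Integrable (fun ω => (X ω).im * (Y ω).re) P := iir.integrable_mul hXim hYre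
    rw [e, integral_add m3 m4, h3, h4]
  rw [← integral_re_add_im hXY, ← integral_re_add_im hX, ← integral_re_add_im hY]
  have hI : (RCLike.I : ℂ) = Complex.I := rfl
  simp only [hI, RCLike.re_to_complex, RCLike.im_to_complex] at A B ⊢
  rw [A, B]
  apply Complex.ext <;> simp <;> ring

lemma int1d (v : ℤ) :
    ∫ t : ℝ, Set.indicator (Set.Icc (0:ℝ) 1) (fun t => eC (t * v)) t
      = if v = 0 then 1 else 0 := by
  rw [integral_indicator measurableSet_Icc, integral_Icc_eq_integral_Ioc,
    ← intervalIntegral.integral_of_le zero_le_one]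
  by_cases hv : v = 0
  · subst hv
    simp only [Int.cast_zero, mul_zero, eC_zero, if_pos]
    simp
  · have hc : (2 * Real.pi * (v:ℝ) : ℂ) * Complex.I ≠ 0 := by
      apply mul_ne_zero _ Complex.I_ne_zero
      have : (2 * Real.pi * (v:ℝ) : ℝ) ≠ 0 := by
        have : (v : ℝ) ≠ 0 := Int.cast_ne_zero.2 hv
        positivity
      exact_mod_cast Complex.ofReal_ne_zero.2 this
    have he : ∀ t : ℝ, eC (t * v) = Complex.exp (((2 * Real.pi * (v:ℝ) : ℝ) : ℂ) * Complex.I * t) := by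
      intro t; rw [eC]; congr 1; push_cast; ring
    rw [if_neg hv, intervalIntegral.integral_congr (fun t _ => he t)]
    rw [integral_exp_mul_complex (by exact_mod_cast hc)]
    have h1 : ((2 * Real.pi * (v:ℝ) : ℝ) : ℂ) * Complex.I * ((1:ℝ):ℂ)
        = (v : ℂ) * (2 * (Real.pi : ℂ) * Complex.I) := by push_cast; ring
    rw [h1, Complex.exp_int_mul_two_pi_mul_I v]
    simp

lemma intcube (d : ℕ) (v : Fin d → ℤ) :
    ∫ θ : Fin d → ℝ, ∏ j, Set.indicator (Set.Icc (0:ℝ) 1) (fun t => eC (t * v j)) (θ j)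
      = if v = 0 then 1 else 0 := by
  rw [MeasureTheory.integral_fintype_prod_volume_eq_prod (ι := Fin d)
    (f := fun j t => Set.indicator (Set.Icc (0:ℝ) 1) (fun s => eC (s * v j)) t)]
  rw [Finset.prod_congr rfl (fun j _ => int1d (v j))]
  by_cases hv : v = 0
  · subst hv
    simp
  · rw [if_neg hv]
    obtain ⟨j, hj⟩ := Function.ne_iff.1 hv
    have hj' : v j ≠ 0 := by simpa using hj
    exact Finset.prod_eq_zero (Finset.mem_univ j) (by rw [if_neg hj'])


lemma charfun (hξ : IsSRW P ξ) (hd : d ≠ 0) (θ : Fin d → ℝ) (n : ℕ) :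
    ∫ ω, ch d θ (∑ k ∈ Finset.range n, ξ k ω) ∂P = ((ph d θ : ℂ)) ^ n := by
  induction n with
  | zero =>
    simp only [Finset.range_zero, Finset.sum_empty, ch_zero, pow_zero]
    simp
  | succ n ih =>
    have i2 : IndepFun (fun ω => ∑ k ∈ Finset.range n, ξ k ω) (ξ n) P := by
      have := hξ.2.1.indepFun_sum_range_succ hξ.1 n
      convert this using 1
      funext ω; simp [Finset.sum_apply]
    have icomp : IndepFun (fun ω => ch d θ (∑ k ∈ Finset.range n, ξ k ω))
        (fun ω => ch d θ (ξ n ω)) P := by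
      have h' := i2.comp (φ := ch d θ) (ψ := ch d θ)
        (measurable_of_countable _) (measurable_of_countable _)
      simpa [Function.comp_def] using h'
    have int1 : Integrable (fun ω => ch d θ (∑ k ∈ Finset.range n, ξ k ω)) P :=
      integrable_bdd_one' ((measurable_of_countable (ch d θ)).comp
        (meas_sum hξ.1 _)).aestronglyMeasurable (fun ω => le_of_eq (norm_ch θ _))
    have int2 : Integrable (fun ω => ch d θ (ξ n ω)) P :=
      integrable_bdd_one' ((measurable_of_countable (ch d θ)).comp
        (hξ.1 n)).aestronglyMeasurable (fun ω => le_of_eq (norm_ch θ _))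
    calc ∫ ω, ch d θ (∑ k ∈ Finset.range (n+1), ξ k ω) ∂P
        = ∫ ω, ch d θ (∑ k ∈ Finset.range n, ξ k ω) * ch d θ (ξ n ω) ∂P := by
          refine integral_congr_ae (Filter.Eventually.of_forall fun ω => ?_)
          show ch d θ (∑ k ∈ Finset.range (n+1), ξ k ω)
            = ch d θ (∑ k ∈ Finset.range n, ξ k ω) * ch d θ (ξ n ω)
          rw [Finset.sum_range_succ, ch_add]
      _ = (∫ ω, ch d θ (∑ k ∈ Finset.range n, ξ k ω) ∂P) * ∫ ω, ch d θ (ξ n ω) ∂P :=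
          indep_integral_mul_complex icomp int1 int2
      _ = ((ph d θ : ℂ)) ^ (n+1) := by rw [ih, onestep hξ hd θ n, pow_succ]

lemma continuous_eC : Continuous eC := by
  unfold eC
  fun_prop

lemma inversion (hξ : IsSRW P ξ) (hd : d ≠ 0) (k : ℕ) :
    (P {ω | ∑ j ∈ Finset.range k, ξ j ω = 0}).toReal
      = ∫ θ : Fin d → ℝ,
          (∏ j, Set.indicator (Set.Icc (0:ℝ) 1) (fun _ => (1:ℝ)) (θ j)) * (ph d θ) ^ k := by
  classical
  set T : Ω → (Fin d → ℤ) := fun ω => ∑ j ∈ Finset.range k, ξ j ω with hT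
  have hTmeas : Measurable T := meas_sum hξ.1 _
  set c : (Fin d → ℝ) → ℂ := fun θ => ∏ j, Set.indicator (Set.Icc (0:ℝ) 1) (fun _ => (1:ℂ)) (θ j)
    with hc
  set G : (Fin d → ℝ) → Ω → ℂ := fun θ ω => c θ * ch d θ (T ω) with hG
  have hGmeas : Measurable (Function.uncurry G) := by
    apply Measurable.mul
    · apply Finset.measurable_prod
      intro j _
      exact (measurable_const.indicator measurableSet_Icc).comp'
        ((measurable_pi_apply j).comp' measurable_fst)
    · unfold ch
      apply Finset.measurable_prod
      intro j _
      apply continuous_eC.measurable.comp'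
      exact ((measurable_pi_apply j).comp' measurable_fst).mul
        ((measurable_of_countable (fun z : ℤ => (z : ℝ))).comp'
          ((measurable_pi_apply j).comp' (hTmeas.comp' measurable_snd)))
  have hnormG : ∀ p : (Fin d → ℝ) × Ω, ‖Function.uncurry G p‖
      = ∏ j, Set.indicator (Set.Icc (0:ℝ) 1) (fun _ => (1:ℝ)) (p.1 j) := by
    rintro ⟨θ, ω⟩
    rw [Function.uncurry, hG]
    simp only [norm_mul, norm_ch, mul_one, hc, norm_prod]
    refine Finset.prod_congr rfl fun j _ => ?_
    by_cases hj : θ j ∈ Set.Icc (0:ℝ) 1 <;>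
      simp [Set.indicator_of_mem, Set.indicator_of_notMem, hj]
  have hcRint : Integrable (fun θ : Fin d → ℝ =>
      ∏ j, Set.indicator (Set.Icc (0:ℝ) 1) (fun _ => (1:ℝ)) (θ j)) := by
    apply Integrable.fintype_prod (f := fun _ t => Set.indicator (Set.Icc (0:ℝ) 1) (fun _ => (1:ℝ)) t)
    intro i
    rw [integrable_indicator_iff measurableSet_Icc]
    exact integrableOn_const (by simp [Real.volume_Icc])
  have hGint : Integrable (Function.uncurry G) ((volume : Measure (Fin d → ℝ)).prod P) := by
    have hdom : Integrable (fun p : (Fin d → ℝ) × Ω =>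
        (∏ j, Set.indicator (Set.Icc (0:ℝ) 1) (fun _ => (1:ℝ)) (p.1 j)) * 1)
        ((volume : Measure (Fin d → ℝ)).prod P) :=
      hcRint.mul_prod (integrable_const 1)
    refine hdom.mono' hGmeas.aestronglyMeasurable (Filter.Eventually.of_forall fun p => ?_)
    rw [hnormG p]
    have : (0:ℝ) ≤ ∏ j, Set.indicator (Set.Icc (0:ℝ) 1) (fun _ => (1:ℝ)) (p.1 j) :=
      Finset.prod_nonneg fun j _ => Set.indicator_nonneg (fun _ _ => zero_le_one) _
    simp [abs_of_nonneg this]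
  have hswap := integral_integral_swap (f := G) hGint
  -- LHS of swap: ∫θ ∫ω G θ ω = ∫θ c θ * (ph θ)^k
  have hL : ∫ θ : Fin d → ℝ, ∫ ω, G θ ω ∂P
      = ∫ θ : Fin d → ℝ, c θ * ((ph d θ : ℂ)) ^ k := by
    refine integral_congr_ae (Filter.Eventually.of_forall fun θ => ?_)
    simp only [hG]
    rw [integral_const_mul, charfun hξ hd θ k]
  -- RHS of swap: ∫ω ∫θ G θ ω = (P {T = 0}).toReal
  have hR : ∫ ω, ∫ θ : Fin d → ℝ, G θ ω ∂(volume : Measure (Fin d → ℝ)) ∂P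
      = ((P {ω | T ω = 0}).toReal : ℂ) := by
    have hinner : ∀ ω, ∫ θ : Fin d → ℝ, G θ ω ∂(volume : Measure (Fin d → ℝ))
        = if T ω = 0 then 1 else 0 := by
      intro ω
      rw [← intcube d (T ω)]
      refine integral_congr_ae (Filter.Eventually.of_forall fun θ => ?_)
      simp only [hG, hc, ch]
      rw [← Finset.prod_mul_distrib]
      refine Finset.prod_congr rfl fun j _ => ?_
      by_cases hj : θ j ∈ Set.Icc (0:ℝ) 1 <;>
        simp [Set.indicator_of_mem, Set.indicator_of_notMem, hj]
    rw [integral_congr_ae (Filter.Eventually.of_forall hinner)]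
    have : (fun ω => if T ω = 0 then (1:ℂ) else 0)
        = Set.indicator {ω | T ω = 0} (fun _ => (1:ℂ)) := by
      funext ω
      rw [Set.indicator_apply]
      rfl
    have hms : MeasurableSet {ω | T ω = 0} := hTmeas (measurableSet_singleton 0)
    rw [this, integral_indicator_const (1:ℂ) hms, Complex.real_smul, mul_one, measureReal_def]
  rw [hswap, hR] at hL
  -- now hL : toReal = ∫θ c θ * (ph)^k  (complex). Convert to real.
  have hcongr : ∫ θ : Fin d → ℝ, c θ * ((ph d θ : ℂ)) ^ k
      = ∫ θ : Fin d → ℝ,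
          (((∏ j, Set.indicator (Set.Icc (0:ℝ) 1) (fun _ => (1:ℝ)) (θ j)) * (ph d θ) ^ k : ℝ) : ℂ) := by
    refine integral_congr_ae (Filter.Eventually.of_forall fun θ => ?_)
    push_cast
    congr 1
    simp only [hc]
    push_cast
    refine Finset.prod_congr rfl fun j _ => ?_
    by_cases hj : θ j ∈ Set.Icc (0:ℝ) 1 <;>
      simp [Set.indicator_of_mem, Set.indicator_of_notMem, hj]
  rw [hcongr.trans (integral_ofReal (f := fun θ : Fin d → ℝ =>
    (∏ j, Set.indicator (Set.Icc (0:ℝ) 1) (fun _ => (1:ℝ)) (θ j)) * (ph d θ) ^ k))] at hL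
  exact Complex.ofReal_inj.mp hL

lemma sqrt16 : Real.sqrt 16 = 4 := by
  rw [show (16:ℝ) = 4^2 by norm_num, Real.sqrt_sq (by norm_num : (0:ℝ) ≤ 4)]

lemma oneD (a : ℝ) (ha : 1 ≤ a) :
    ∫ t : ℝ, Set.indicator (Set.Icc (0:ℝ) 1)
        (fun t => Real.exp (-(a * Real.sin (2 * Real.pi * t) ^ 2))) t
      ≤ 2 / Real.sqrt a := by
  have ha0 : 0 < a := lt_of_lt_of_le one_pos ha
  set g : ℝ → ℝ := fun t => Real.exp (-(a * Real.sin (2 * Real.pi * t) ^ 2)) with hg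
  have hgc : Continuous g := by
    apply Real.continuous_exp.comp
    fun_prop
  have hint : ∀ u v : ℝ, IntervalIntegrable g volume u v := fun u v =>
    hgc.intervalIntegrable u v
  rw [integral_indicator measurableSet_Icc, integral_Icc_eq_integral_Ioc,
    ← intervalIntegral.integral_of_le zero_le_one]
  have h12 : ∫ t in (1/2:ℝ)..1, g t = ∫ t in (0:ℝ)..(1/2:ℝ), g t := by
    have hcomp := intervalIntegral.integral_comp_add_right (a := (0:ℝ)) (b := (1/2:ℝ))
      (f := g) (1/2)
    rw [show (0:ℝ)+1/2 = 1/2 by norm_num, show (1/2:ℝ)+1/2 = 1 by norm_num] at hcomp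
    rw [← hcomp]
    refine intervalIntegral.integral_congr fun t _ => ?_
    simp only [hg]
    rw [show 2 * Real.pi * (t + 1/2) = 2 * Real.pi * t + Real.pi by ring, Real.sin_add_pi,
      neg_sq]
  have h14 : ∫ t in (1/4:ℝ)..(1/2:ℝ), g t = ∫ t in (0:ℝ)..(1/4:ℝ), g t := by
    have hcomp := intervalIntegral.integral_comp_sub_left (a := (0:ℝ)) (b := (1/4:ℝ))
      (f := g) (1/2)
    rw [show (1/2:ℝ)-1/4 = 1/4 by norm_num, show (1/2:ℝ)-0 = 1/2 by norm_num] at hcomp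
    rw [← hcomp]
    refine intervalIntegral.integral_congr fun t _ => ?_
    simp only [hg]
    rw [show 2 * Real.pi * (1/2 - t) = Real.pi - 2 * Real.pi * t by ring, Real.sin_pi_sub]
  have hsplit1 : ∫ t in (0:ℝ)..1, g t
      = (∫ t in (0:ℝ)..(1/2:ℝ), g t) + ∫ t in (1/2:ℝ)..1, g t :=
    (intervalIntegral.integral_add_adjacent_intervals (hint 0 (1/2)) (hint (1/2) 1)).symm
  have hsplit2 : ∫ t in (0:ℝ)..(1/2:ℝ), g t
      = (∫ t in (0:ℝ)..(1/4:ℝ), g t) + ∫ t in (1/4:ℝ)..(1/2:ℝ), g t :=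
    (intervalIntegral.integral_add_adjacent_intervals (hint 0 (1/4)) (hint (1/4) (1/2))).symm
  have htotal : ∫ t in (0:ℝ)..1, g t = 4 * ∫ t in (0:ℝ)..(1/4:ℝ), g t := by
    rw [hsplit1, h12, hsplit2, h14]; ring
  have hptwise : ∀ t ∈ Set.Icc (0:ℝ) (1/4:ℝ), g t ≤ Real.exp (-(16*a) * t^2) := by
    intro t ht
    obtain ⟨ht0, ht1⟩ := ht
    have hsin : 4 * t ≤ Real.sin (2 * Real.pi * t) := by
      have := Real.mul_le_sin (x := 2 * Real.pi * t) (by positivity)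
        (by nlinarith [Real.pi_pos])
      calc 4 * t = 2 / Real.pi * (2 * Real.pi * t) := by
            have hπ : Real.pi ≠ 0 := Real.pi_ne_zero
            field_simp
            ring
          _ ≤ Real.sin (2 * Real.pi * t) := this
    have hsq : (4*t)^2 ≤ Real.sin (2 * Real.pi * t) ^ 2 :=
      pow_le_pow_left₀ (by positivity) hsin 2
    simp only [hg]
    apply Real.exp_le_exp.2
    nlinarith
  have hmono : ∫ t in (0:ℝ)..(1/4:ℝ), g t ≤ ∫ t in (0:ℝ)..(1/4:ℝ), Real.exp (-(16*a) * t^2) := by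
    apply intervalIntegral.integral_mono_on (by norm_num) (hint 0 (1/4))
      ((integrable_exp_neg_mul_sq (by positivity)).intervalIntegrable)
    exact hptwise
  have hgauss : ∫ t in (0:ℝ)..(1/4:ℝ), Real.exp (-(16*a) * t^2) ≤ Real.sqrt (π / (16*a)) := by
    rw [intervalIntegral.integral_of_le (by norm_num)]
    calc ∫ t in Set.Ioc (0:ℝ) (1/4:ℝ), Real.exp (-(16*a) * t^2)
        ≤ ∫ t : ℝ, Real.exp (-(16*a) * t^2) := by
          apply setIntegral_le_integral (integrable_exp_neg_mul_sq (by positivity))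
          exact Filter.Eventually.of_forall fun x => (Real.exp_pos _).le
      _ = Real.sqrt (π / (16*a)) := integral_gaussian (16*a)
  have hval : Real.sqrt (π / (16*a)) = Real.sqrt π / (4 * Real.sqrt a) := by
    rw [Real.sqrt_div (le_of_lt Real.pi_pos), Real.sqrt_mul (by norm_num : (0:ℝ) ≤ 16), sqrt16]
  have hsq2 : Real.sqrt π ≤ 2 := by
    calc Real.sqrt π ≤ Real.sqrt 4 := Real.sqrt_le_sqrt Real.pi_le_four
      _ = 2 := by rw [show (4:ℝ) = 2^2 by norm_num, Real.sqrt_sq (by norm_num : (0:ℝ) ≤ 2)]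
  have hsa : 0 < Real.sqrt a := Real.sqrt_pos.2 ha0
  rw [htotal]
  calc 4 * ∫ t in (0:ℝ)..(1/4:ℝ), g t ≤ 4 * (Real.sqrt π / (4 * Real.sqrt a)) := by
        rw [← hval]; linarith [hmono.trans hgauss]
    _ = Real.sqrt π / Real.sqrt a := by field_simp
    _ ≤ 2 / Real.sqrt a := by gcongr



lemma continuous_ph (d : ℕ) : Continuous (ph d) := by
  unfold ph
  fun_prop

lemma cubeBound (hd5 : 5 ≤ d) (m : ℕ) (hm : d ≤ m) :
    ∫ θ : Fin d → ℝ,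
        (∏ j, Set.indicator (Set.Icc (0:ℝ) 1) (fun _ => (1:ℝ)) (θ j)) * (ph d θ) ^ (2 * m)
      ≤ (2 * Real.sqrt ((d : ℝ) / m)) ^ d := by
  have hd0 : (0:ℝ) < d := by
    have : 0 < d := by omega
    exact_mod_cast this
  have hm0 : (0:ℝ) < m := by
    have : 0 < m := by omega
    exact_mod_cast this
  set a : ℝ := (m : ℝ) / d with ha'
  have ha : 1 ≤ a := (one_le_div hd0).2 (Nat.cast_le.2 hm)
  have ha0 : 0 < a := lt_of_lt_of_le one_pos ha
  have hpt : ∀ θ : Fin d → ℝ,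
      (∏ j, Set.indicator (Set.Icc (0:ℝ) 1) (fun _ => (1:ℝ)) (θ j)) * (ph d θ) ^ (2 * m)
      ≤ ∏ j, Set.indicator (Set.Icc (0:ℝ) 1)
          (fun t => Real.exp (-(a * Real.sin (2 * Real.pi * t) ^ 2))) (θ j) := by
    intro θ
    by_cases hθ : ∀ j, θ j ∈ Set.Icc (0:ℝ) 1
    · have hc1 : (∏ j, Set.indicator (Set.Icc (0:ℝ) 1) (fun _ => (1:ℝ)) (θ j)) = 1 :=
        Finset.prod_eq_one fun j _ => by rw [Set.indicator_of_mem (hθ j)]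
      have hrhs : ∏ j, Set.indicator (Set.Icc (0:ℝ) 1)
          (fun t => Real.exp (-(a * Real.sin (2 * Real.pi * t) ^ 2))) (θ j)
          = ∏ j, Real.exp (-(a * Real.sin (2 * Real.pi * θ j) ^ 2)) :=
        Finset.prod_congr rfl fun j _ => Set.indicator_of_mem (hθ j) _
      rw [hc1, one_mul, hrhs, ← Real.exp_sum]
      set S : ℝ := ∑ j, Real.sin (2 * Real.pi * θ j) ^ 2 with hS
      have hSnn : 0 ≤ S := Finset.sum_nonneg fun j _ => sq_nonneg _
      have key : (ph d θ) ^ 2 ≤ Real.exp (-((d:ℝ)⁻¹ * S)) := by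
        have hCS : (∑ j, Real.cos (2 * Real.pi * θ j)) ^ 2
            ≤ (d : ℝ) * ∑ j, Real.cos (2 * Real.pi * θ j) ^ 2 := by
          have := sq_sum_le_card_mul_sum_sq (s := (Finset.univ : Finset (Fin d)))
            (f := fun j => Real.cos (2 * Real.pi * θ j))
          simpa using this
        have h2 : ∑ j, Real.cos (2 * Real.pi * θ j) ^ 2 = (d : ℝ) - S := by
          rw [Finset.sum_congr rfl fun j _ => Real.cos_sq' (2 * Real.pi * θ j)]
          rw [Finset.sum_sub_distrib]
          simp [hS]
        have h1 : (ph d θ) ^ 2 ≤ 1 - (d:ℝ)⁻¹ * S := by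
          rw [ph, mul_pow]
          have := mul_le_mul_of_nonneg_left hCS (le_of_lt (by positivity :
            (0:ℝ) < ((d:ℝ)⁻¹) ^ 2))
          calc ((d:ℝ)⁻¹) ^ 2 * (∑ j, Real.cos (2 * Real.pi * θ j)) ^ 2
              ≤ ((d:ℝ)⁻¹) ^ 2 * ((d : ℝ) * ∑ j, Real.cos (2 * Real.pi * θ j) ^ 2) := this
            _ = (d:ℝ)⁻¹ * ∑ j, Real.cos (2 * Real.pi * θ j) ^ 2 := by
                field_simp
            _ = 1 - (d:ℝ)⁻¹ * S := by
                rw [h2]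
                field_simp
        have h3 : 1 - (d:ℝ)⁻¹ * S ≤ Real.exp (-((d:ℝ)⁻¹ * S)) := by
          have := Real.add_one_le_exp (-((d:ℝ)⁻¹ * S))
          linarith
        exact h1.trans h3
      calc (ph d θ) ^ (2 * m) = ((ph d θ) ^ 2) ^ m := by rw [← pow_mul]
        _ ≤ (Real.exp (-((d:ℝ)⁻¹ * S))) ^ m := pow_le_pow_left₀ (sq_nonneg _) key m
        _ = Real.exp (∑ j, -(a * Real.sin (2 * Real.pi * θ j) ^ 2)) := by
            rw [← Real.exp_nat_mul]
            congr 1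
            have : ∑ j, -(a * Real.sin (2 * Real.pi * θ j) ^ 2) = -(a * S) := by
              rw [hS, Finset.mul_sum, ← Finset.sum_neg_distrib]
            rw [this, ha']
            field_simp
    · obtain ⟨j0, hj0⟩ := not_forall.1 hθ
      have hzero : (∏ j, Set.indicator (Set.Icc (0:ℝ) 1) (fun _ => (1:ℝ)) (θ j)) = 0 :=
        Finset.prod_eq_zero (Finset.mem_univ j0) (Set.indicator_of_notMem hj0 _)
      rw [hzero, zero_mul]
      exact Finset.prod_nonneg fun j _ =>
        Set.indicator_nonneg (fun t _ => (Real.exp_pos _).le) _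
  have hRint : Integrable (fun θ : Fin d → ℝ => ∏ j, Set.indicator (Set.Icc (0:ℝ) 1)
      (fun t => Real.exp (-(a * Real.sin (2 * Real.pi * t) ^ 2))) (θ j)) := by
    apply Integrable.fintype_prod (f := fun (_ : Fin d) t => Set.indicator (Set.Icc (0:ℝ) 1)
      (fun t => Real.exp (-(a * Real.sin (2 * Real.pi * t) ^ 2))) t)
    intro i
    rw [integrable_indicator_iff measurableSet_Icc]
    exact ContinuousOn.integrableOn_compact isCompact_Icc
      (Continuous.continuousOn (by fun_prop))
  have hLnn : 0 ≤ᵐ[volume] fun θ : Fin d → ℝ =>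
      (∏ j, Set.indicator (Set.Icc (0:ℝ) 1) (fun _ => (1:ℝ)) (θ j)) * (ph d θ) ^ (2 * m) := by
    refine Filter.Eventually.of_forall fun θ => ?_
    apply mul_nonneg
    · exact Finset.prod_nonneg fun j _ => Set.indicator_nonneg (fun t _ => zero_le_one) _
    · rw [show 2 * m = m * 2 by ring, pow_mul]
      exact sq_nonneg _
  have hInt := integral_mono_of_nonneg hLnn hRint (Filter.Eventually.of_forall hpt)
  rw [MeasureTheory.integral_fintype_prod_volume_eq_pow (ι := Fin d) (fun t => Set.indicator (Set.Icc (0:ℝ) 1)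
    (fun t => Real.exp (-(a * Real.sin (2 * Real.pi * t) ^ 2))) t), Fintype.card_fin] at hInt
  refine hInt.trans ?_
  have h1d := oneD a ha
  have hnn : 0 ≤ ∫ t : ℝ, Set.indicator (Set.Icc (0:ℝ) 1)
      (fun t => Real.exp (-(a * Real.sin (2 * Real.pi * t) ^ 2))) t :=
    integral_nonneg fun t => Set.indicator_nonneg (fun t _ => (Real.exp_pos _).le) _
  have heq : 2 / Real.sqrt a = 2 * Real.sqrt ((d:ℝ) / m) := by
    rw [ha', show (d:ℝ)/m = ((m:ℝ)/d)⁻¹ by rw [inv_div], Real.sqrt_inv]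
    rw [div_eq_mul_inv]
  exact pow_le_pow_left₀ hnn (h1d.trans_eq heq) d

lemma probBound (hξ : IsSRW P ξ) (hd5 : 5 ≤ d) (k : ℕ) (hk : 2 * d ≤ k) :
    (P {ω | ∑ j ∈ Finset.range k, ξ j ω = 0}).toReal
      ≤ (2 * Real.sqrt ((d : ℝ) / (k / 2 : ℕ))) ^ d := by
  have hd : d ≠ 0 := by omega
  set m : ℕ := k / 2 with hm
  have hm2 : 2 * m ≤ k := by omega
  have hmd : d ≤ m := by omega
  rw [inversion hξ hd k]
  have hcRint : Integrable (fun θ : Fin d → ℝ =>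
      ∏ j, Set.indicator (Set.Icc (0:ℝ) 1) (fun _ => (1:ℝ)) (θ j)) := by
    apply Integrable.fintype_prod (f := fun (_ : Fin d) t =>
      Set.indicator (Set.Icc (0:ℝ) 1) (fun _ => (1:ℝ)) t)
    intro i
    rw [integrable_indicator_iff measurableSet_Icc]
    exact integrableOn_const (by simp [Real.volume_Icc])
  have hmeasR : ∀ j : ℕ, AEStronglyMeasurable (fun θ : Fin d → ℝ =>
      (∏ i, Set.indicator (Set.Icc (0:ℝ) 1) (fun _ => (1:ℝ)) (θ i)) * (ph d θ) ^ j) volume := by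
    intro j
    apply AEStronglyMeasurable.mul
    · exact hcRint.1
    · exact ((continuous_ph d).pow j).aestronglyMeasurable
  have hcRnn : ∀ θ : Fin d → ℝ,
      0 ≤ ∏ i, Set.indicator (Set.Icc (0:ℝ) 1) (fun _ => (1:ℝ)) (θ i) :=
    fun θ => Finset.prod_nonneg fun i _ => Set.indicator_nonneg (fun t _ => zero_le_one) _
  have hcRle : ∀ θ : Fin d → ℝ,
      (∏ i, Set.indicator (Set.Icc (0:ℝ) 1) (fun _ => (1:ℝ)) (θ i)) ≤ 1 := by
    intro θ
    apply Finset.prod_le_one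
    · exact fun i _ => Set.indicator_nonneg (fun t _ => zero_le_one) _
    · intro i _
      exact Set.indicator_le_self' (fun t _ => zero_le_one) _ |>.trans (le_refl _) |>.trans
        (by by_cases h : θ i ∈ Set.Icc (0:ℝ) 1 <;>
          simp [Set.indicator_of_mem, Set.indicator_of_notMem, h])
  have hint : ∀ j : ℕ, Integrable (fun θ : Fin d → ℝ =>
      (∏ i, Set.indicator (Set.Icc (0:ℝ) 1) (fun _ => (1:ℝ)) (θ i)) * (ph d θ) ^ j) := by
    intro j
    refine hcRint.mono' (hmeasR j) (Filter.Eventually.of_forall fun θ => ?_)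
    rw [Real.norm_eq_abs, abs_mul, abs_of_nonneg (hcRnn θ), abs_pow]
    calc (∏ i, Set.indicator (Set.Icc (0:ℝ) 1) (fun _ => (1:ℝ)) (θ i)) * |ph d θ| ^ j
        ≤ (∏ i, Set.indicator (Set.Icc (0:ℝ) 1) (fun _ => (1:ℝ)) (θ i)) * 1 := by
          apply mul_le_mul_of_nonneg_left _ (hcRnn θ)
          exact pow_le_one₀ (abs_nonneg _) (abs_ph_le_one hd θ)
      _ = _ := mul_one _
  have hpt : ∀ θ : Fin d → ℝ,
      (∏ i, Set.indicator (Set.Icc (0:ℝ) 1) (fun _ => (1:ℝ)) (θ i)) * (ph d θ) ^ k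
      ≤ (∏ i, Set.indicator (Set.Icc (0:ℝ) 1) (fun _ => (1:ℝ)) (θ i)) * (ph d θ) ^ (2 * m) := by
    intro θ
    apply mul_le_mul_of_nonneg_left _ (hcRnn θ)
    calc (ph d θ) ^ k ≤ |(ph d θ) ^ k| := le_abs_self _
      _ = |ph d θ| ^ k := abs_pow _ _
      _ ≤ |ph d θ| ^ (2 * m) := pow_le_pow_of_le_one (abs_nonneg _) (abs_ph_le_one hd θ) hm2
      _ = ((ph d θ) ^ 2) ^ m := by rw [← pow_mul, ← abs_pow, show 2 * m = m * 2 by ring,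
            pow_mul, abs_pow, sq_abs, ← pow_mul, show m * 2 = 2 * m by ring]
      _ = (ph d θ) ^ (2 * m) := by rw [← pow_mul]
  calc ∫ θ : Fin d → ℝ,
        (∏ i, Set.indicator (Set.Icc (0:ℝ) 1) (fun _ => (1:ℝ)) (θ i)) * (ph d θ) ^ k
      ≤ ∫ θ : Fin d → ℝ,
        (∏ i, Set.indicator (Set.Icc (0:ℝ) 1) (fun _ => (1:ℝ)) (θ i)) * (ph d θ) ^ (2 * m) :=
        integral_mono (hint k) (hint (2 * m)) hpt
    _ ≤ (2 * Real.sqrt ((d : ℝ) / m)) ^ d := cubeBound hd5 m hmd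

def Creal (d : ℕ) : ℝ := (2 * d : ℝ) ^ 3 + (4 * Real.sqrt d) ^ d

lemma Creal_nonneg (d : ℕ) : 0 ≤ Creal d := by
  unfold Creal
  positivity

lemma arith_main (d k : ℕ) (hd5 : 5 ≤ d) (hk : 2 * d ≤ k) :
    (2 * Real.sqrt ((d:ℝ) / (k / 2 : ℕ))) ^ d ≤ Creal d * ((k:ℝ) + 1) ^ (-(5/2 : ℝ)) := by
  set m : ℕ := k / 2 with hm
  have hk1 : (0:ℝ) < (k:ℝ) + 1 := by positivity
  have hk1' : (1:ℝ) ≤ (k:ℝ) + 1 := by have : (0:ℝ) ≤ k := Nat.cast_nonneg k; linarith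
  have hm0 : 0 < m := by omega
  have hmR : (0:ℝ) < m := by exact_mod_cast hm0
  have h4m : (k:ℝ) + 1 ≤ 4 * m := by
    have : k + 1 ≤ 4 * m := by omega
    exact_mod_cast this
  have hdm : (d:ℝ) / m ≤ 4 * d / ((k:ℝ) + 1) := by
    rw [div_le_div_iff₀ hmR hk1]
    have hd0 : (0:ℝ) ≤ d := Nat.cast_nonneg d
    nlinarith
  have hrpow : ((k:ℝ)+1) ^ (-(1/2:ℝ)) = (Real.sqrt ((k:ℝ)+1))⁻¹ := by
    rw [Real.rpow_neg hk1.le, Real.sqrt_eq_rpow]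
  have hsq : Real.sqrt ((d:ℝ) / m) ≤ 2 * Real.sqrt d * ((k:ℝ)+1) ^ (-(1/2:ℝ)) := by
    calc Real.sqrt ((d:ℝ)/m) ≤ Real.sqrt (4 * d / ((k:ℝ)+1)) := Real.sqrt_le_sqrt hdm
      _ = 2 * Real.sqrt d * ((k:ℝ)+1) ^ (-(1/2:ℝ)) := by
        rw [div_eq_mul_inv, Real.sqrt_mul (by positivity),
          Real.sqrt_mul (by norm_num : (0:ℝ) ≤ 4),
          show Real.sqrt 4 = 2 by
            rw [show (4:ℝ) = 2^2 by norm_num, Real.sqrt_sq (by norm_num : (0:ℝ) ≤ 2)],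
          Real.sqrt_inv, hrpow]
  have hsqnn : 0 ≤ Real.sqrt ((d:ℝ)/m) := Real.sqrt_nonneg _
  have step1 : (2 * Real.sqrt ((d:ℝ)/m)) ^ d
      ≤ (4 * Real.sqrt d) ^ d * (((k:ℝ)+1) ^ (-(1/2:ℝ))) ^ d := by
    rw [← mul_pow]
    apply pow_le_pow_left₀ (by positivity)
    calc 2 * Real.sqrt ((d:ℝ)/m) ≤ 2 * (2 * Real.sqrt d * ((k:ℝ)+1) ^ (-(1/2:ℝ))) := by
          linarith
      _ = 4 * Real.sqrt d * ((k:ℝ)+1) ^ (-(1/2:ℝ)) := by ring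
  have step2 : (((k:ℝ)+1) ^ (-(1/2:ℝ))) ^ d = ((k:ℝ)+1) ^ (-(d:ℝ)/2) := by
    rw [← Real.rpow_natCast (((k:ℝ)+1) ^ (-(1/2:ℝ))) d, ← Real.rpow_mul hk1.le]
    congr 1
    ring
  have step3 : ((k:ℝ)+1) ^ (-(d:ℝ)/2) ≤ ((k:ℝ)+1) ^ (-(5/2:ℝ)) := by
    apply Real.rpow_le_rpow_of_exponent_le hk1'
    have : (5:ℝ) ≤ d := by exact_mod_cast hd5
    linarith
  calc (2 * Real.sqrt ((d:ℝ)/m)) ^ d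
      ≤ (4 * Real.sqrt d) ^ d * (((k:ℝ)+1) ^ (-(1/2:ℝ))) ^ d := step1
    _ = (4 * Real.sqrt d) ^ d * ((k:ℝ)+1) ^ (-(d:ℝ)/2) := by rw [step2]
    _ ≤ (4 * Real.sqrt d) ^ d * ((k:ℝ)+1) ^ (-(5/2:ℝ)) := by
        apply mul_le_mul_of_nonneg_left step3 (by positivity)
    _ ≤ Creal d * ((k:ℝ)+1) ^ (-(5/2:ℝ)) := by
        apply mul_le_mul_of_nonneg_right _ (Real.rpow_nonneg hk1.le _)
        unfold Creal
        nlinarith [pow_nonneg (by positivity : (0:ℝ) ≤ 2 * (d:ℝ)) 3]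

lemma arith_small (d k : ℕ) (hd5 : 5 ≤ d) (hk : k < 2 * d) :
    (1:ℝ) ≤ Creal d * ((k:ℝ) + 1) ^ (-(5/2 : ℝ)) := by
  have hk1 : (0:ℝ) < (k:ℝ) + 1 := by positivity
  have hpos : (0:ℝ) < ((k:ℝ)+1) ^ ((5:ℝ)/2) := Real.rpow_pos_of_pos hk1 _
  have hkk : (k:ℝ) + 1 ≤ 2 * d := by
    have : k + 1 ≤ 2 * d := by omega
    exact_mod_cast this
  have h2d1 : (1:ℝ) ≤ 2 * d := by
    have : (1:ℕ) ≤ 2 * d := by omega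
    exact_mod_cast this
  have h1 : ((k:ℝ)+1) ^ ((5:ℝ)/2) ≤ (2*(d:ℝ)) ^ 3 := by
    calc ((k:ℝ)+1) ^ ((5:ℝ)/2) ≤ (2*(d:ℝ)) ^ ((5:ℝ)/2) :=
          Real.rpow_le_rpow (by positivity) hkk (by norm_num)
      _ ≤ (2*(d:ℝ)) ^ ((3:ℕ):ℝ) :=
          Real.rpow_le_rpow_of_exponent_le h2d1 (by norm_num)
      _ = (2*(d:ℝ)) ^ 3 := Real.rpow_natCast _ 3
  rw [Real.rpow_neg hk1.le, ← div_eq_mul_inv, le_div_iff₀ hpos, one_mul]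
  calc ((k:ℝ)+1) ^ ((5:ℝ)/2) ≤ (2*(d:ℝ))^3 := h1
    _ ≤ Creal d := by
      unfold Creal
      have : (0:ℝ) ≤ (4 * Real.sqrt d) ^ d := by positivity
      linarith

lemma summable_aux : Summable (fun n : ℕ => ((n : ℝ) + 1) ^ (-(5/4 : ℝ))) := by
  have h : Summable (fun n : ℕ => (n : ℝ) ^ (-(5/4 : ℝ))) :=
    Real.summable_nat_rpow.2 (by norm_num)
  have h2 := (summable_nat_add_iff 1).2 h
  refine h2.congr fun n => ?_
  push_cast
  ring_nf

lemma crossBound (n m : ℕ) : ((n + m : ℝ) + 1) ^ (-(5/2 : ℝ))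
    ≤ ((n : ℝ) + 1) ^ (-(5/4 : ℝ)) * ((m : ℝ) + 1) ^ (-(5/4 : ℝ)) := by
  have hx : (0:ℝ) < (n:ℝ) + 1 := by positivity
  have hy : (0:ℝ) < (m:ℝ) + 1 := by positivity
  have hs : (0:ℝ) < (n + m : ℝ) + 1 := by positivity
  have hprod : ((n:ℝ)+1) * ((m:ℝ)+1) ≤ ((n+m:ℝ)+1)^2 := by
    have hn : (0:ℝ) ≤ n := Nat.cast_nonneg n
    have hm : (0:ℝ) ≤ m := Nat.cast_nonneg m
    nlinarith
  rw [← Real.mul_rpow hx.le hy.le]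
  rw [Real.rpow_neg hs.le, Real.rpow_neg (by positivity)]
  apply inv_anti₀ (Real.rpow_pos_of_pos (by positivity) _)
  calc (((n:ℝ)+1) * ((m:ℝ)+1)) ^ ((5:ℝ)/4)
      ≤ (((n+m:ℝ)+1)^2) ^ ((5:ℝ)/4) := Real.rpow_le_rpow (by positivity) hprod (by norm_num)
    _ = ((n+m:ℝ)+1) ^ ((5:ℝ)/2) := by
        rw [← Real.rpow_natCast ((n+m:ℝ)+1) 2, ← Real.rpow_mul hs.le]
        norm_num


lemma probBound' (hξ : IsSRW P ξ) (hd5 : 5 ≤ d) (k : ℕ) :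
    (P {ω | ∑ j ∈ Finset.range k, ξ j ω = 0}).toReal
      ≤ Creal d * ((k : ℝ) + 1) ^ (-(5/2 : ℝ)) := by
  by_cases hk : 2 * d ≤ k
  · exact (probBound hξ hd5 k hk).trans (arith_main d k hd5 hk)
  · have h1 : (P {ω | ∑ j ∈ Finset.range k, ξ j ω = 0}).toReal ≤ 1 := by
      calc (P {ω | ∑ j ∈ Finset.range k, ξ j ω = 0}).toReal ≤ (P Set.univ).toReal :=
          ENNReal.toReal_mono (measure_ne_top P _) (measure_mono (Set.subset_univ _))
        _ = 1 := by simp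
    exact h1.trans (arith_small d k hd5 (by omega))

end SRW

theorem stmt_0 (d : ℕ) (hd : 5 ≤ d)
    (Ω : Type) [MeasurableSpace Ω] (P : Measure Ω) [IsProbabilityMeasure P]
    (ξ : ℕ → Ω → (Fin d → ℤ)) (hξ : IsSRW P ξ) :
    ∑' i : Fin d → ℤ, (P {ω | ∃ n : ℕ, walk ξ i n ω = 0}) ^ 2 < ⊤ := by
  classical
  open SRW in
  have hd0 : d ≠ 0 := by omega
  set p : ℕ → (Fin d → ℤ) → ENNReal :=
    fun n v => P {ω | ∑ k ∈ Finset.range n, ξ k ω = v} with hp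
  have hhit : ∀ i : Fin d → ℤ,
      P {ω | ∃ n : ℕ, walk ξ i n ω = 0} ≤ ∑' n, p n (-i) := by
    intro i
    have hset : {ω | ∃ n : ℕ, walk ξ i n ω = 0}
        = ⋃ n, {ω | ∑ k ∈ Finset.range n, ξ k ω = -i} := by
      ext ω
      simp only [Set.mem_setOf_eq, Set.mem_iUnion, walk]
      constructor
      · rintro ⟨n, hn⟩
        exact ⟨n, (neg_eq_of_add_eq_zero_right hn).symm⟩
      · rintro ⟨n, hn⟩
        exact ⟨n, by rw [hn]; simp⟩
    rw [hset]
    exact measure_iUnion_le _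
  set a : ℕ → ENNReal := fun n => ENNReal.ofReal (((n:ℝ)+1) ^ (-(5/4:ℝ))) with ha
  set C : ENNReal := ENNReal.ofReal (SRW.Creal d) with hC
  have hbound : ∀ n m : ℕ, p (n + m) 0 ≤ C * (a n * a m) := by
    intro n m
    have h1 : p (n+m) 0 = ENNReal.ofReal ((p (n+m) 0).toReal) :=
      (ENNReal.ofReal_toReal (measure_ne_top P _)).symm
    rw [h1]
    have h2 := SRW.probBound' hξ hd (n+m)
    have h3 : (p (n+m) 0).toReal
        ≤ SRW.Creal d * ((((n:ℝ)+1) ^ (-(5/4:ℝ))) * (((m:ℝ)+1) ^ (-(5/4:ℝ)))) := by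
      refine h2.trans ?_
      have hcb := SRW.crossBound n m
      have hC0 := SRW.Creal_nonneg d
      push_cast at hcb ⊢
      exact mul_le_mul_of_nonneg_left hcb hC0
    calc ENNReal.ofReal ((p (n+m) 0).toReal)
        ≤ ENNReal.ofReal (SRW.Creal d * ((((n:ℝ)+1) ^ (-(5/4:ℝ))) * (((m:ℝ)+1) ^ (-(5/4:ℝ))))) :=
          ENNReal.ofReal_le_ofReal h3
      _ = C * (a n * a m) := by
          rw [ENNReal.ofReal_mul (SRW.Creal_nonneg d),
            ENNReal.ofReal_mul (Real.rpow_nonneg (by positivity) _)]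
  have hafin : ∑' n, a n < ⊤ := by
    rw [ha]
    rw [← ENNReal.ofReal_tsum_of_nonneg (fun n => Real.rpow_nonneg (by positivity) _)
      SRW.summable_aux]
    exact ENNReal.ofReal_lt_top
  calc ∑' i : Fin d → ℤ, (P {ω | ∃ n : ℕ, walk ξ i n ω = 0}) ^ 2
      ≤ ∑' i : Fin d → ℤ, (∑' n, p n (-i)) ^ 2 :=
        ENNReal.tsum_le_tsum fun i => pow_le_pow_left' (hhit i) 2
    _ = ∑' i : Fin d → ℤ, (∑' n, p n i) ^ 2 :=
        (Equiv.neg (Fin d → ℤ)).tsum_eq (fun i => (∑' n, p n i) ^ 2)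
    _ = ∑' i, ∑' n, ∑' m, p n i * p m i := by
        refine tsum_congr fun i => ?_
        rw [sq, ← ENNReal.tsum_mul_right]
        exact tsum_congr fun n => (ENNReal.tsum_mul_left).symm
    _ = ∑' n, ∑' i, ∑' m, p n i * p m i := ENNReal.tsum_comm
    _ = ∑' n, ∑' m, ∑' i, p n i * p m i := tsum_congr fun n => ENNReal.tsum_comm
    _ = ∑' n, ∑' m, p (n + m) 0 := by
        refine tsum_congr fun n => tsum_congr fun m => ?_
        exact SRW.key6 hξ n m
    _ ≤ ∑' n, ∑' m, C * (a n * a m) :=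
        ENNReal.tsum_le_tsum fun n => ENNReal.tsum_le_tsum fun m => hbound n m
    _ = ∑' n, (C * a n) * ∑' m, a m := by
        refine tsum_congr fun n => ?_
        simp_rw [← mul_assoc]
        exact ENNReal.tsum_mul_left
    _ = C * (∑' n, a n) * ∑' m, a m := by
        rw [ENNReal.tsum_mul_right, ENNReal.tsum_mul_left]
    _ < ⊤ := by
        apply ENNReal.mul_lt_top
        · apply ENNReal.mul_lt_top
          · exact ENNReal.ofReal_lt_top
          · exact hafin
        · exact hafin
end
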